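/- Let F be a spreading linear triple system on a finite set V with |V| = n > 5. If T, T' ∈ F are adjacent triples, then Val(T) + Val(T') ≤ n. -/
import Mathlib


open Finset

variable {α : Type*}

/-- A pair of (distinct) vertices is covered if it lies in some triple of `F`. -/
def Covered [DecidableEq α] (F : Finset (Finset α)) (x y : α) : Prop :=
  ∃ T ∈ F, x ∈ T ∧ y ∈ T

instance [DecidableEq α] (F : Finset (Finset α)) (x y : α) : Decidable (Covered F x y) :=
  inferInstanceAs (Decidable (∃ T ∈ F, x ∈ T ∧ y ∈ T))

/-- Linear triple system on `V`. -/
def IsLinearTS [DecidableEq α] (V : Finset α) (F : Finset (Finset α)) : Prop :=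
  (∀ T ∈ F, T ⊆ V ∧ T.card = 3) ∧
    ∀ x ∈ V, ∀ y ∈ V, x ≠ y → (F.filter fun T => x ∈ T ∧ y ∈ T).card ≤ 1

/-- Steiner triple system on `V`. -/
def IsSTS [DecidableEq α] (V : Finset α) (F : Finset (Finset α)) : Prop :=
  (∀ T ∈ F, T ⊆ V ∧ T.card = 3) ∧
    ∀ x ∈ V, ∀ y ∈ V, x ≠ y → (F.filter fun T => x ∈ T ∧ y ∈ T).card = 1

/-- Neighbourhood of `V'` with respect to the triple system `F` on `V`. -/
def nbhd [DecidableEq α] (V : Finset α) (F : Finset (Finset α)) (V' : Finset α) : Finset α :=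
  (V \ V').filter fun z => ∃ x ∈ V', ∃ y ∈ V', x ≠ y ∧ ({x, y, z} : Finset α) ∈ F

/-- `F` is spreading: the closure of every nontrivial subset is `V`. -/
def IsSpreading [DecidableEq α] (V : Finset α) (F : Finset (Finset α)) : Prop :=
  ∀ V' ⊆ V, 3 ≤ V'.card → V' ∉ F →
    ∀ W, V' ⊆ W → W ⊆ V → nbhd V F W = ∅ → W = V

/-- `F` is weakly spreading. -/
def IsWeaklySpreading [DecidableEq α] (V : Finset α) (F : Finset (Finset α)) : Prop :=
  ∀ F' ⊆ F, 2 ≤ F'.card →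
    ∀ W, F'.biUnion id ⊆ W → W ⊆ V → nbhd V F W = ∅ → W = V

/-- `Val(T)`: number of private neighbours of the triple `T`. -/
def valT [DecidableEq α] (V : Finset α) (F : Finset (Finset α)) (T : Finset α) : ℕ :=
  ((V \ T).filter fun v => (T.filter fun t => Covered F v t).card = 1).card

/-- Two triples are adjacent if pairs of each span a `C₄` in the complement of the skeleton. -/
def AdjT [DecidableEq α] (F : Finset (Finset α)) (T T' : Finset α) : Prop :=
  ∃ v₁ ∈ T, ∃ v₂ ∈ T, ∃ u₁ ∈ T', ∃ u₂ ∈ T',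
    v₁ ≠ v₂ ∧ u₁ ≠ u₂ ∧ v₁ ≠ u₁ ∧ v₁ ≠ u₂ ∧ v₂ ≠ u₁ ∧ v₂ ≠ u₂ ∧
    ¬Covered F v₁ u₁ ∧ ¬Covered F u₁ v₂ ∧ ¬Covered F v₂ u₂ ∧ ¬Covered F u₂ v₁

instance [DecidableEq α] (F : Finset (Finset α)) (T T' : Finset α) : Decidable (AdjT F T T') :=
  inferInstanceAs (Decidable (∃ v₁ ∈ T, ∃ v₂ ∈ T, ∃ u₁ ∈ T', ∃ u₂ ∈ T',
    v₁ ≠ v₂ ∧ u₁ ≠ u₂ ∧ v₁ ≠ u₁ ∧ v₁ ≠ u₂ ∧ v₂ ≠ u₁ ∧ v₂ ≠ u₂ ∧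
    ¬Covered F v₁ u₁ ∧ ¬Covered F u₁ v₂ ∧ ¬Covered F v₂ u₂ ∧ ¬Covered F u₂ v₁))

lemma covered_symm [DecidableEq α] {F : Finset (Finset α)} {x y : α}
    (h : Covered F x y) : Covered F y x := by
  obtain ⟨T, hT, hx, hy⟩ := h; exact ⟨T, hT, hy, hx⟩

lemma no_indep_triangle [DecidableEq α] {V : Finset α} {F : Finset (Finset α)}
    (hS : IsSpreading V F) (hV : 3 < V.card) {x y z : α}
    (hx : x ∈ V) (hy : y ∈ V) (hz : z ∈ V)
    (hxy : x ≠ y) (hyz : y ≠ z) (hxz : x ≠ z)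
    (cxy : ¬Covered F x y) (cyz : ¬Covered F y z) (cxz : ¬Covered F x z) : False := by
  set S : Finset α := {x, y, z} with hSdef
  have hSV : S ⊆ V := by
    intro a ha
    simp only [hSdef, mem_insert, mem_singleton] at ha
    rcases ha with rfl | rfl | rfl <;> assumption
  have hcard : S.card = 3 := by
    rw [hSdef, card_insert_of_notMem (by simp [hxy, hxz]),
      card_insert_of_notMem (by simp [hyz]), card_singleton]
  have hSF : S ∉ F := fun h => cxy ⟨S, h, by simp [hSdef], by simp [hSdef]⟩
  have hnb : nbhd V F S = ∅ := by
    rw [eq_empty_iff_forall_notMem]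
    intro w hw
    simp only [nbhd, mem_filter] at hw
    obtain ⟨-, a, ha, b, hb, hab, habF⟩ := hw
    have hcov : Covered F a b := ⟨_, habF, by simp, by simp⟩
    simp only [hSdef, mem_insert, mem_singleton] at ha hb
    rcases ha with rfl | rfl | rfl <;> rcases hb with rfl | rfl | rfl <;>
      first
        | exact hab rfl
        | exact cxy hcov
        | exact cyz hcov
        | exact cxz hcov
        | exact cxy (covered_symm hcov)
        | exact cyz (covered_symm hcov)
        | exact cxz (covered_symm hcov)
  have := hS S hSV (by omega) hSF S (Finset.Subset.refl S) hSV hnb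
  rw [this] at hcard
  omega

/-- If `T, T'` are adjacent triples of a spreading linear triple system
on `n > 5` vertices, then `Val(T) + Val(T') ≤ n`. -/
theorem statement_10 {α : Type*} [DecidableEq α] (V : Finset α) (F : Finset (Finset α))
    (n : ℕ) (hn : V.card = n) (hL : IsLinearTS V F) (hS : IsSpreading V F) (hV : 5 < n)
    (T T' : Finset α) (hT : T ∈ F) (hT' : T' ∈ F) (hAdj : AdjT F T T') :
    valT V F T + valT V F T' ≤ n := by
  obtain ⟨hTF, hlin⟩ := hL
  obtain ⟨v₁, hv₁, v₂, hv₂, u₁, hu₁, u₂, hu₂, hv12, hu12, h11, h12, h21, h22,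
    c11, c12, c22, c21⟩ := hAdj
  have hTV : T ⊆ V := (hTF T hT).1
  have hT'V : T' ⊆ V := (hTF T' hT').1
  set A := (V \ T).filter (fun v => (T.filter fun t => Covered F v t).card = 1) with hA
  set B := (V \ T').filter (fun v => (T'.filter fun t => Covered F v t).card = 1) with hB
  have hdisj : Disjoint A B := by
    rw [Finset.disjoint_left]
    intro w hwA hwB
    simp only [hA, hB, mem_filter, mem_sdiff] at hwA hwB
    obtain ⟨⟨hwV, hwT⟩, hcT⟩ := hwA
    obtain ⟨⟨-, hwT'⟩, hcT'⟩ := hwB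
    have keyT : ¬(Covered F w v₁ ∧ Covered F w v₂) := by
      rintro ⟨hc1, hc2⟩
      have hsub : ({v₁, v₂} : Finset α) ⊆ T.filter (fun t => Covered F w t) := by
        intro a ha
        simp only [mem_insert, mem_singleton] at ha
        rcases ha with rfl | rfl
        · exact mem_filter.2 ⟨hv₁, hc1⟩
        · exact mem_filter.2 ⟨hv₂, hc2⟩
      have := Finset.card_le_card hsub
      rw [card_insert_of_notMem (by simp [hv12]), card_singleton] at this
      omega
    have keyT' : ¬(Covered F w u₁ ∧ Covered F w u₂) := by
      rintro ⟨hc1, hc2⟩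
      have hsub : ({u₁, u₂} : Finset α) ⊆ T'.filter (fun t => Covered F w t) := by
        intro a ha
        simp only [mem_insert, mem_singleton] at ha
        rcases ha with rfl | rfl
        · exact mem_filter.2 ⟨hu₁, hc1⟩
        · exact mem_filter.2 ⟨hu₂, hc2⟩
      have := Finset.card_le_card hsub
      rw [card_insert_of_notMem (by simp [hu12]), card_singleton] at this
      omega
    have hv : ∃ v, v ∈ T ∧ ¬Covered F w v ∧ ¬Covered F v u₁ ∧ ¬Covered F v u₂ ∧
        v ≠ u₁ ∧ v ≠ u₂ := by
      by_cases hc1 : Covered F w v₁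
      · exact ⟨v₂, hv₂, fun hc2 => keyT ⟨hc1, hc2⟩,
          fun h => c12 (covered_symm h), c22, h21, h22⟩
      · exact ⟨v₁, hv₁, hc1, c11, fun h => c21 (covered_symm h), h11, h12⟩
    obtain ⟨v, hvT, cwv, cvu1, cvu2, hvu1, hvu2⟩ := hv
    have hu : ∃ u, u ∈ T' ∧ ¬Covered F w u ∧ ¬Covered F v u ∧ v ≠ u := by
      by_cases hc1 : Covered F w u₁
      · exact ⟨u₂, hu₂, fun hc2 => keyT' ⟨hc1, hc2⟩, cvu2, hvu2⟩
      · exact ⟨u₁, hu₁, hc1, cvu1, hvu1⟩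
    obtain ⟨u, huT', cwu, cvu, hvu⟩ := hu
    exact no_indep_triangle hS (by omega) hwV (hTV hvT) (hT'V huT')
      (fun h => hwT (h ▸ hvT)) hvu (fun h => hwT' (h ▸ huT')) cwv cvu cwu
  have hunion : A ∪ B ⊆ V := by
    intro a ha
    rcases mem_union.1 ha with h | h
    · exact (mem_sdiff.1 (mem_filter.1 h).1).1
    · exact (mem_sdiff.1 (mem_filter.1 h).1).1
  calc valT V F T + valT V F T' = A.card + B.card := rfl
    _ = (A ∪ B).card := (card_union_of_disjoint hdisj).symm
    _ ≤ V.card := Finset.card_le_card hunion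
    _ = n := hn
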